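/- For every integer a ≥ 2, the set S^(a) = ⋃_{i ≥ 0} {a^(2i), a^(2i)+1, ..., a^(2i+1)} is 4-free: there exists a bijective enumeration of S^(a) that contains no 4-term arithmetic progression as a subsequence. -/

import Mathlib

/-- `f : ℕ → ℕ` is a (bijective) enumeration of the set `S`. -/
def IsPermOf (f : ℕ → ℕ) (S : Set ℕ) : Prop :=
  Function.Injective f ∧ Set.range f = S

/-- A set `S` of naturals is 4-free if some enumeration of `S` contains no
4-term arithmetic progression (with nonzero, possibly negative, common
difference) as a subsequence. -/
def FourFree (S : Set ℕ) : Prop :=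
  ∃ f : ℕ → ℕ, IsPermOf f S ∧
    ¬ ∃ i₁ i₂ i₃ i₄ : ℕ, i₁ < i₂ ∧ i₂ < i₃ ∧ i₃ < i₄ ∧
      ((f i₂ : ℤ) - (f i₁ : ℤ) = (f i₃ : ℤ) - (f i₂ : ℤ)) ∧
      ((f i₃ : ℤ) - (f i₂ : ℤ) = (f i₄ : ℤ) - (f i₃ : ℤ)) ∧
      f i₁ ≠ f i₂



namespace SaFF

/-- reverse the low `m` bits of `x` -/
def key : ℕ → ℕ → ℕ
  | 0, _ => 0
  | m+1, x => x % 2 * 2^m + key m (x / 2)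

lemma key_lt (m x : ℕ) : key m x < 2^m := by
  induction m generalizing x with
  | zero => simp [key]
  | succ m ih =>
    have := ih (x / 2)
    have h2 : x % 2 ≤ 1 := Nat.le_of_lt_succ (Nat.mod_lt _ (by norm_num))
    have : x % 2 * 2^m ≤ 2^m := by nlinarith
    simp only [key, pow_succ]
    omega

lemma key_inj (m : ℕ) : ∀ x z, x < 2^m → z < 2^m → key m x = key m z → x = z := by
  induction m with
  | zero => intro x z hx hz _; omega
  | succ m ih =>
    intro x z hx hz h
    simp only [key] at h
    have k1 := key_lt m (x / 2)
    have k2 := key_lt m (z / 2)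
    have hp2 : (2:ℕ)^(m+1) = 2^m * 2 := pow_succ 2 m
    rcases Nat.mod_two_eq_zero_or_one x with hx0 | hx0 <;>
      rcases Nat.mod_two_eq_zero_or_one z with hz0 | hz0 <;>
      rw [hx0, hz0] at h <;> simp only [one_mul, zero_mul, zero_add] at h
    · have := ih (x/2) (z/2) (by omega) (by omega) (by omega); omega
    · omega
    · omega
    · have := ih (x/2) (z/2) (by omega) (by omega) (by omega); omega

lemma key3 (m : ℕ) : ∀ x y z, x < 2^m → z < 2^m → x + z = 2 * y → x ≠ z →
    key m y < key m x → key m z < key m y → False := by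
  induction m with
  | zero => intro x y z hx hz _ hne _ _; omega
  | succ m ih =>
    intro x y z hx hz hap hne h1 h2
    simp only [key] at h1 h2
    have kx := key_lt m (x / 2)
    have ky := key_lt m (y / 2)
    have kz := key_lt m (z / 2)
    have hp2 : (2:ℕ)^(m+1) = 2^m * 2 := pow_succ 2 m
    rcases Nat.mod_two_eq_zero_or_one x with hx0 | hx0 <;>
      rcases Nat.mod_two_eq_zero_or_one y with hy0 | hy0 <;>
      rcases Nat.mod_two_eq_zero_or_one z with hz0 | hz0 <;>
      rw [hx0, hy0] at h1 <;> rw [hy0, hz0] at h2 <;>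
      simp only [one_mul, zero_mul, zero_add] at h1 h2
    · exact ih (x/2) (y/2) (z/2) (by omega) (by omega) (by omega) (by omega) h1 h2
    · omega
    · omega
    · omega
    · omega
    · omega
    · omega
    · exact ih (x/2) (y/2) (z/2) (by omega) (by omega) (by omega) (by omega) (by omega) (by omega)

end SaFF

namespace SaFF

variable (a : ℕ)

/-- size of block `b` -/
def L (b : ℕ) : ℕ := a ^ (2*b+1) - a ^ (2*b) + 1

/-- number of bits used for block `b` -/
def mm (b : ℕ) : ℕ := a * (2*b+1)

lemma L_pos (b : ℕ) : 1 ≤ L a b := by simp [L]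

lemma pow_le_pow_block (ha : 2 ≤ a) {i j : ℕ} (h : i ≤ j) : a ^ i ≤ a ^ j :=
  Nat.pow_le_pow_right (by omega) h

lemma L_le (ha : 2 ≤ a) (b : ℕ) : L a b ≤ a ^ (2*b+1) := by
  have h1 : 1 ≤ a ^ (2*b) := Nat.one_le_pow _ _ (by omega)
  have h2 : a ^ (2*b) ≤ a ^ (2*b+1) := pow_le_pow_block a ha (by omega)
  simp only [L]; omega

lemma L_le_two_pow (ha : 2 ≤ a) (b : ℕ) : L a b ≤ 2 ^ (mm a b) := by
  calc L a b ≤ a ^ (2*b+1) := L_le a ha b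
    _ ≤ (2 ^ a) ^ (2*b+1) := Nat.pow_le_pow_left (Nat.lt_two_pow_self (n := a)).le _
    _ = 2 ^ (mm a b) := by rw [← pow_mul]; rfl

/-- the ordering of block `b`: offsets sorted by decreasing key -/
def blist (b : ℕ) : List ℕ :=
  (List.range (L a b)).mergeSort (fun x y => decide (key (mm a b) y ≤ key (mm a b) x))

lemma blist_perm (b : ℕ) : (blist a b).Perm (List.range (L a b)) :=
  List.mergeSort_perm _ _

lemma blist_length (b : ℕ) : (blist a b).length = L a b := by
  simpa using (blist_perm a b).length_eq

lemma blist_nodup (b : ℕ) : (blist a b).Nodup :=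
  (blist_perm a b).nodup_iff.2 List.nodup_range

lemma blist_elem_lt (b r : ℕ) (h : r < (blist a b).length) : (blist a b)[r] < L a b := by
  have := (blist_perm a b).mem_iff.1 (List.getElem_mem h)
  simpa using this

lemma blist_sorted (b : ℕ) :
    List.Pairwise (fun x y => key (mm a b) y ≤ key (mm a b) x) (blist a b) := by
  have := List.pairwise_mergeSort
    (le := fun x y => decide (key (mm a b) y ≤ key (mm a b) x))
    (fun x y z hxy hyz => by
      simp only [decide_eq_true_eq] at *; omega)
    (fun x y => by
      simp only [Bool.or_eq_true, decide_eq_true_eq]; omega)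
    (List.range (L a b))
  refine (List.Pairwise.imp ?_ this)
  intro x y h; simpa using h

lemma blist_key_lt (ha : 2 ≤ a) (b : ℕ) {p q : ℕ} (hq : q < (blist a b).length)
    (hpq : p < q) :
    key (mm a b) ((blist a b)[q]) < key (mm a b) ((blist a b)[p]'(by omega)) := by
  have hle := (List.pairwise_iff_get.1 (blist_sorted a b)) ⟨p, by omega⟩ ⟨q, hq⟩ hpq
  simp only [List.get_eq_getElem] at hle
  rcases lt_or_eq_of_le hle with h | h
  · exact h
  · exfalso
    have h2 : 2 ^ mm a b ≥ L a b := L_le_two_pow a ha b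
    have l1 : (blist a b)[q] < 2 ^ mm a b := lt_of_lt_of_le (blist_elem_lt a b q hq) h2
    have l2 : (blist a b)[p]'(by omega) < 2 ^ mm a b :=
      lt_of_lt_of_le (blist_elem_lt a b p (by omega)) h2
    have := key_inj (mm a b) _ _ l1 l2 h
    have := (blist_nodup a b).getElem_inj_iff.1 this
    omega

/-- starting position of block `b` -/
def P : ℕ → ℕ
  | 0 => 0
  | b+1 => P b + L a b

lemma P_mono {b b' : ℕ} (h : b ≤ b') : P a b ≤ P a b' := by
  induction b' with
  | zero => simp_all
  | succ b' ih =>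
    rcases Nat.lt_or_ge b (b'+1) with h2 | h2
    · have := ih (by omega); have := L_pos a b'; simp only [P]; omega
    · have hb : b = b' + 1 := by omega
      exact le_of_eq (by rw [hb])

lemma le_P (b : ℕ) : b ≤ P a b := by
  induction b with
  | zero => simp [P]
  | succ b ih => have := L_pos a b; simp only [P]; omega

/-- block index of position `n` -/
def idx (n : ℕ) : ℕ := Nat.findGreatest (fun b => P a b ≤ n) n

lemma idx_spec (n : ℕ) : P a (idx a n) ≤ n ∧ n < P a (idx a n + 1) := by
  constructor
  · exact Nat.findGreatest_spec (P := fun b => P a b ≤ n) (Nat.zero_le n) (by simp [P])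
  · by_contra h
    push_neg at h
    rcases Nat.lt_or_ge n (idx a n + 1) with h2 | h2
    · have := le_P a (idx a n + 1); omega
    · exact Nat.findGreatest_is_greatest (P := fun b => P a b ≤ n) (Nat.lt_succ_self _) h2 h

lemma idx_unique {n b : ℕ} (h1 : P a b ≤ n) (h2 : n < P a (b+1)) : idx a n = b := by
  have hs := idx_spec a n
  rcases Nat.lt_or_ge (idx a n) b with h3 | h3
  · have := P_mono a (show idx a n + 1 ≤ b by omega); omega
  · rcases Nat.lt_or_ge b (idx a n) with h4 | h4
    · have := P_mono a (show b + 1 ≤ idx a n by omega); omega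
    · omega

lemma idx_mono {n n' : ℕ} (h : n ≤ n') : idx a n ≤ idx a n' := by
  have h1 := idx_spec a n
  have h2 := idx_spec a n'
  by_contra hc
  push_neg at hc
  have := P_mono a (show idx a n' + 1 ≤ idx a n by omega)
  omega

/-- the enumeration -/
def f (n : ℕ) : ℕ := a ^ (2 * idx a n) + (blist a (idx a n)).getD (n - P a (idx a n)) 0

lemma off_lt (n : ℕ) : n - P a (idx a n) < (blist a (idx a n)).length := by
  have := idx_spec a n
  rw [blist_length]
  simp only [P] at this
  omega

lemma f_eq (n : ℕ) : f a n = a ^ (2 * idx a n) + (blist a (idx a n))[n - P a (idx a n)]'(off_lt a n) := by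
  rw [f, List.getD_eq_getElem _ _ (off_lt a n)]

lemma f_mem (ha : 2 ≤ a) (n : ℕ) :
    f a n ∈ Set.Icc (a ^ (2 * idx a n)) (a ^ (2 * idx a n + 1)) := by
  rw [f_eq]
  have h1 := blist_elem_lt a (idx a n) _ (off_lt a n)
  have h2 : 1 ≤ a ^ (2 * idx a n) := Nat.one_le_pow _ _ (by omega)
  have h3 : a ^ (2 * idx a n) ≤ a ^ (2 * idx a n + 1) := pow_le_pow_block a ha (by omega)
  simp only [Set.mem_Icc, L] at *
  omega

end SaFF

namespace SaFF

variable (a : ℕ)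

/-- the offset of `f a n` within its block -/
def off (n : ℕ) : ℕ := (blist a (idx a n)).getD (n - P a (idx a n)) 0

lemma f_def (n : ℕ) : f a n = a ^ (2 * idx a n) + off a n := rfl

lemma off_lt_L (n : ℕ) : off a n < L a (idx a n) := by
  rw [off, List.getD_eq_getElem _ _ (off_lt a n)]
  exact blist_elem_lt a _ _ (off_lt a n)

lemma f_pos (ha : 2 ≤ a) (n : ℕ) : 1 ≤ f a n := by
  have h := f_mem a ha n
  simp only [Set.mem_Icc] at h
  have : 1 ≤ a ^ (2 * idx a n) := Nat.one_le_pow _ _ (by omega)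
  omega

lemma idx_eq_of_f_eq (ha : 2 ≤ a) {n n' : ℕ} (h : f a n = f a n') :
    idx a n = idx a n' := by
  have h1 := f_mem a ha n
  have h2 := f_mem a ha n'
  simp only [Set.mem_Icc] at h1 h2
  by_contra hc
  rcases Nat.lt_or_ge (idx a n) (idx a n') with hl | hl
  · have : a ^ (2 * idx a n + 1) < a ^ (2 * idx a n') :=
      Nat.pow_lt_pow_right (by omega) (by omega)
    omega
  · have : a ^ (2 * idx a n' + 1) < a ^ (2 * idx a n) :=
      Nat.pow_lt_pow_right (by omega) (by omega)
    omega

lemma f_inj (ha : 2 ≤ a) : Function.Injective (f a) := by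
  intro n n' h
  have hb := idx_eq_of_f_eq a ha h
  rw [f, f, ← hb] at h
  have hs := idx_spec a n
  have hs' := idx_spec a n'
  rw [← hb] at hs'
  have hl' : n' - P a (idx a n) < (blist a (idx a n)).length := by
    rw [blist_length]; simp only [P] at hs'; omega
  rw [List.getD_eq_getElem _ _ (off_lt a n), List.getD_eq_getElem _ _ hl'] at h
  have he : n - P a (idx a n) = n' - P a (idx a n) :=
    (blist_nodup a (idx a n)).getElem_inj_iff.1 (by omega)
  omega

lemma f_range (ha : 2 ≤ a) :
    Set.range (f a) = ⋃ i : ℕ, Set.Icc (a ^ (2 * i)) (a ^ (2 * i + 1)) := by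
  ext x
  simp only [Set.mem_range, Set.mem_iUnion]
  constructor
  · rintro ⟨n, rfl⟩; exact ⟨idx a n, f_mem a ha n⟩
  · rintro ⟨i, hx⟩
    simp only [Set.mem_Icc] at hx
    have hr : x - a ^ (2 * i) < L a i := by simp only [L]; omega
    have hmem : x - a ^ (2 * i) ∈ blist a i :=
      (blist_perm a i).mem_iff.2 (List.mem_range.2 hr)
    obtain ⟨j, hj, hval⟩ := List.mem_iff_getElem.1 hmem
    refine ⟨P a i + j, ?_⟩
    have hlen : (blist a i).length = L a i := blist_length a i
    have hidx : idx a (P a i + j) = i :=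
      idx_unique a (by omega) (by simp only [P]; omega)
    rw [f, hidx, Nat.add_sub_cancel_left, List.getD_eq_getElem _ _ hj, hval]
    have h1 : 1 ≤ a ^ (2 * i) := Nat.one_le_pow _ _ (by omega)
    omega

lemma f_double (ha : 2 ≤ a) {n n' : ℕ} (h : idx a n < idx a n') :
    2 * f a n ≤ f a n' := by
  have h1 := f_mem a ha n
  have h2 := f_mem a ha n'
  simp only [Set.mem_Icc] at h1 h2
  have hp : a ^ (2 * idx a n + 2) ≤ a ^ (2 * idx a n') := pow_le_pow_block a ha (by omega)
  have hstep : a ^ (2 * idx a n + 2) = a * a ^ (2 * idx a n + 1) := by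
    rw [pow_succ, mul_comm]
  have hmul : 2 * a ^ (2 * idx a n + 1) ≤ a * a ^ (2 * idx a n + 1) :=
    Nat.mul_le_mul_right _ ha
  omega

lemma key_mono (ha : 2 ≤ a) {b n n' : ℕ} (hn : idx a n = b) (hn' : idx a n' = b)
    (hnn : n < n') :
    key (mm a b) (off a n') < key (mm a b) (off a n) := by
  subst hn
  have hs := idx_spec a n
  have hs' := idx_spec a n'
  rw [hn'] at hs'
  rw [off, off, hn']
  have hl' : n' - P a (idx a n) < (blist a (idx a n)).length := by
    rw [blist_length]; simp only [P] at hs'; omega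
  rw [List.getD_eq_getElem _ _ (off_lt a n), List.getD_eq_getElem _ _ hl']
  exact blist_key_lt a ha (idx a n) hl' (by omega)

end SaFF

/-- For every integer `a ≥ 2`, the set `⋃ i, {a^(2i), ..., a^(2i+1)}` is 4-free. -/
theorem S_a_fourFree (a : ℕ) (ha : 2 ≤ a) :
    FourFree (⋃ i : ℕ, Set.Icc (a ^ (2 * i)) (a ^ (2 * i + 1))) := by
  refine ⟨SaFF.f a, ⟨SaFF.f_inj a ha, SaFF.f_range a ha⟩, ?_⟩
  rintro ⟨i₁, i₂, i₃, i₄, h12, h23, h34, e1, e2, hne⟩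
  have hb12 : SaFF.idx a i₁ ≤ SaFF.idx a i₂ := SaFF.idx_mono a h12.le
  have hb23 : SaFF.idx a i₂ ≤ SaFF.idx a i₃ := SaFF.idx_mono a h23.le
  have hb34 : SaFF.idx a i₃ ≤ SaFF.idx a i₄ := SaFF.idx_mono a h34.le
  have hp1 := SaFF.f_pos a ha i₁
  have hp2 := SaFF.f_pos a ha i₂
  have hp3 := SaFF.f_pos a ha i₃
  -- natural number AP equations
  have hap1 : SaFF.f a i₁ + SaFF.f a i₃ = 2 * SaFF.f a i₂ := by omega
  have hap2 : SaFF.f a i₂ + SaFF.f a i₄ = 2 * SaFF.f a i₃ := by omega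
  rcases Nat.lt_or_ge (SaFF.idx a i₂) (SaFF.idx a i₃) with hc | hc
  · -- block of i₂ strictly below block of i₃
    have := SaFF.f_double a ha hc
    omega
  · have hb23' : SaFF.idx a i₃ = SaFF.idx a i₂ := by omega
    rcases Nat.lt_or_ge (SaFF.idx a i₃) (SaFF.idx a i₄) with hc2 | hc2
    · have := SaFF.f_double a ha hc2
      omega
    · have hb34' : SaFF.idx a i₄ = SaFF.idx a i₂ := by omega
      -- all of i₂, i₃, i₄ in the same block: 3-AP within a block, contradiction
      set b := SaFF.idx a i₂ with hb
      have k1 : SaFF.key (SaFF.mm a b) (SaFF.off a i₃) < SaFF.key (SaFF.mm a b) (SaFF.off a i₂) :=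
        SaFF.key_mono a ha rfl hb23' h23
      have k2 : SaFF.key (SaFF.mm a b) (SaFF.off a i₄) < SaFF.key (SaFF.mm a b) (SaFF.off a i₃) :=
        SaFF.key_mono a ha hb23' hb34' h34
      have hf2 : SaFF.f a i₂ = a ^ (2 * b) + SaFF.off a i₂ := SaFF.f_def a i₂
      have hf3 : SaFF.f a i₃ = a ^ (2 * b) + SaFF.off a i₃ := by
        rw [SaFF.f_def, hb23']
      have hf4 : SaFF.f a i₄ = a ^ (2 * b) + SaFF.off a i₄ := by
        rw [SaFF.f_def, hb34']
      have hL : SaFF.L a b ≤ 2 ^ SaFF.mm a b := SaFF.L_le_two_pow a ha b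
      have ho2 : SaFF.off a i₂ < SaFF.L a b := SaFF.off_lt_L a i₂
      have ho4 : SaFF.off a i₄ < SaFF.L a b := by
        have := SaFF.off_lt_L a i₄
        rwa [hb34'] at this
      refine SaFF.key3 (SaFF.mm a b) (SaFF.off a i₂) (SaFF.off a i₃) (SaFF.off a i₄)
        (by omega) (by omega) (by omega) (by omega) k1 k2
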